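/- Let A be a commutative Noetherian ring and I ⊆ A an ideal. If there exists a multiplicative subset S of A such that A/I ≅ S⁻¹A compatibly with the canonical maps, then I is generated by an idempotent element. -/

import Mathlib

/-- If `A` is Noetherian and `A/I` is a localization of `A` at some multiplicative subset
(compatibly with the canonical maps), then `I` is generated by an idempotent. -/
theorem stmt_1 {A : Type} [CommRing A] [IsNoetherianRing A] (I : Ideal A)
    (h : ∃ (S : Submonoid A) (e : Localization S ≃+* A ⧸ I),
      (e : Localization S →+* A ⧸ I).comp (algebraMap A (Localization S)) =
        Ideal.Quotient.mk I) :
    ∃ e : A, IsIdempotentElem e ∧ I = Ideal.span {e} := by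
  classical
  obtain ⟨S, e, he⟩ := h
  -- membership in I is characterized by annihilation by an element of S
  have hmem : ∀ a : A, a ∈ I ↔ ∃ m : S, (m : A) * a = 0 := by
    intro a
    rw [← Ideal.Quotient.eq_zero_iff_mem, ← he]
    have : ((e : Localization S →+* A ⧸ I).comp (algebraMap A (Localization S))) a
        = e (algebraMap A (Localization S) a) := rfl
    rw [this, map_eq_zero_iff e e.injective, IsLocalization.map_eq_zero_iff S]
  -- I is finitely generated
  obtain ⟨T, hT⟩ := IsNoetherian.noetherian I
  -- a single element of S annihilates all generators
  have key : ∀ (U : Finset A), (∀ t ∈ U, t ∈ I) → ∃ m : S, ∀ t ∈ U, (m : A) * t = 0 := by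
    intro U
    induction U using Finset.induction with
    | empty => exact fun _ => ⟨1, by simp⟩
    | insert _ _ hx ih =>
      rename_i a s
      intro hU
      obtain ⟨m, hm⟩ := ih (fun t ht => hU t (Finset.mem_insert_of_mem ht))
      obtain ⟨n, hn⟩ := (hmem a).mp (hU a (Finset.mem_insert_self a s))
      refine ⟨m * n, fun t ht => ?_⟩
      rcases Finset.mem_insert.mp ht with rfl | ht
      · show ((m : A) * (n : A)) * t = 0
        rw [mul_assoc, hn, mul_zero]
      · show ((m : A) * (n : A)) * t = 0
        rw [mul_comm (m : A), mul_assoc, hm t ht, mul_zero]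
  obtain ⟨m, hmkill⟩ := key T (fun t ht => by
    rw [← hT]; exact Ideal.subset_span ht)
  -- m annihilates all of I
  have hann : ∀ a ∈ I, (m : A) * a = 0 := by
    intro a ha
    rw [← hT] at ha
    induction ha using Submodule.span_induction with
    | mem x hx => exact hmkill x hx
    | zero => exact mul_zero _
    | add x y _ _ hx hy => rw [mul_add, hx, hy, add_zero]
    | smul r x _ hx =>
      show (m : A) * (r * x) = 0
      linear_combination r * hx
  -- m is a unit mod I
  have hunit : IsUnit (Ideal.Quotient.mk I (m : A)) := by
    have h1 : Ideal.Quotient.mk I (m : A) = e (algebraMap A (Localization S) (m : A)) := by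
      rw [← he]; rfl
    rw [h1]
    exact (IsLocalization.map_units (Localization S) m).map (e : Localization S →+* A ⧸ I)
  obtain ⟨u, hu⟩ := hunit
  obtain ⟨t, ht⟩ := Ideal.Quotient.mk_surjective (I := I) ((u⁻¹ : (A ⧸ I)ˣ) : A ⧸ I)
  have hmt : Ideal.Quotient.mk I ((m : A) * t) = 1 := by
    rw [map_mul, ← hu, ht, Units.mul_inv]
  have heI : (1 : A) - (m : A) * t ∈ I := by
    rw [← Ideal.Quotient.eq_zero_iff_mem, map_sub, map_one, hmt, sub_self]
  have hse : (m : A) * ((1 : A) - (m : A) * t) = 0 := hann _ heI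
  refine ⟨1 - (m : A) * t, ?_, ?_⟩
  · show ((1 : A) - (m : A) * t) * ((1 : A) - (m : A) * t) = (1 : A) - (m : A) * t
    linear_combination (-t) * hse
  · apply le_antisymm
    · intro a ha
      rw [Ideal.mem_span_singleton]
      exact ⟨a, by linear_combination t * (hann a ha)⟩
    · rw [Ideal.span_le, Set.singleton_subset_iff]
      exact heI
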